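/- Let V₀ > 1, V₂ ∈ ℝ, n ≥ 4, and suppose V(r) = V₀ + V₂r²/2 + Vₙrⁿ/n! + O(rⁿ⁺¹) is an analytic solution of the fifth-order ODE 3r⁴VV⁽⁵⁾ + 6r⁴V'V⁽⁴⁾ + 30r³VV⁽⁴⁾ + 44r³V'V⁽³⁾ + r²(47V − 32)V⁽³⁾ + 8r³(V'')² − 3r(13V + 32)V'' + 26r²V'V'' − 34r(V')² + 3V'(13V + 32) = 0 near r = 0. Then Vₙ = 0. -/

import Mathlib

open Filter Topology

section helpers

lemma itdW {s : Set ℝ} (hs : IsOpen s) {x : ℝ} (hx : x ∈ s) (q : ℕ) (f : ℝ → ℝ) :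
    iteratedDerivWithin q f s x = iteratedDeriv q f x := by
  rw [iteratedDerivWithin_eq_iteratedFDerivWithin, iteratedDeriv_eq_iteratedFDeriv,
    iteratedFDerivWithin_of_isOpen q hs hx]

lemma itd_add {s : Set ℝ} (hs : IsOpen s) (q : ℕ) (f g : ℝ → ℝ)
    (hf : AnalyticOnNhd ℝ f s) (hg : AnalyticOnNhd ℝ g s) {x : ℝ} (hx : x ∈ s) :
    iteratedDeriv q (fun r => f r + g r) x = iteratedDeriv q f x + iteratedDeriv q g x := by
  have h := iteratedDerivWithin_add hx hs.uniqueDiffOn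
    (hf.contDiffOn hs.uniqueDiffOn (n := q) x hx) (hg.contDiffOn hs.uniqueDiffOn (n := q) x hx)
  rw [itdW hs hx, itdW hs hx, itdW hs hx] at h
  exact h

lemma itd_cmul {s : Set ℝ} (hs : IsOpen s) (q : ℕ) (c : ℝ) (f : ℝ → ℝ)
    (hf : AnalyticOnNhd ℝ f s) {x : ℝ} (hx : x ∈ s) :
    iteratedDeriv q (fun r => c * f r) x = c * iteratedDeriv q f x := by
  have h := iteratedDerivWithin_const_mul hx hs.uniqueDiffOn c
    (hf.contDiffOn hs.uniqueDiffOn (n := q) x hx)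
  rw [itdW hs hx, itdW hs hx] at h
  exact h

lemma itd_zero_fun (q : ℕ) (x : ℝ) : iteratedDeriv q (fun _ : ℝ => (0:ℝ)) x = 0 := by
  induction q with
  | zero => simp
  | succ p ih =>
    rw [iteratedDeriv_succ',
      show deriv (fun _ : ℝ => (0:ℝ)) = fun _ : ℝ => (0:ℝ) from funext fun y => deriv_const y 0]
    exact ih

lemma itd_iter (α j : ℕ) (f : ℝ → ℝ) (x : ℝ) :
    iteratedDeriv j (iteratedDeriv α f) x = iteratedDeriv (α + j) f x := by
  simp only [iteratedDeriv_eq_iterate]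
  rw [add_comm α j, Function.iterate_add_apply]

lemma an_iter {s : Set ℝ} {V : ℝ → ℝ} (hA : AnalyticOnNhd ℝ V s) (i : ℕ) :
    AnalyticOnNhd ℝ (iteratedDeriv i V) s := by
  induction i with
  | zero => rw [iteratedDeriv_zero]; exact hA
  | succ p ih => rw [iteratedDeriv_succ]; exact ih.deriv

lemma an_pow (s : Set ℝ) (k : ℕ) : AnalyticOnNhd ℝ (fun r : ℝ => r ^ k) s :=
  fun x _ => (analyticAt_id.pow k)

lemma itd_pow_gen (k : ℕ) : ∀ (j : ℕ) (x : ℝ),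
    iteratedDeriv j (fun r : ℝ => r ^ k) x = (k.descFactorial j : ℝ) * x ^ (k - j) := by
  intro j
  induction j with
  | zero => intro x; simp
  | succ p ih =>
    intro x
    rw [iteratedDeriv_succ,
      show iteratedDeriv p (fun r : ℝ => r ^ k)
        = fun y : ℝ => (k.descFactorial p : ℝ) * y ^ (k - p) from funext fun y => ih y,
      deriv_const_mul _ (differentiableAt_pow _), deriv_pow_field, Nat.descFactorial_succ]
    push_cast
    rw [show k - (p + 1) = k - p - 1 by omega]
    ring

lemma itd_pow_zero (k j : ℕ) :
    iteratedDeriv j (fun r : ℝ => r ^ k) 0 = if j = k then (k.factorial : ℝ) else 0 := by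
  rw [itd_pow_gen]
  rcases eq_or_ne j k with rfl | h
  · simp [Nat.descFactorial_self]
  · rw [if_neg h]
    rcases lt_or_gt_of_ne h with hlt | hgt
    · rw [zero_pow (by omega : k - j ≠ 0), mul_zero]
    · simp [Nat.descFactorial_eq_zero_iff_lt.2 hgt]

lemma leibniz {s : Set ℝ} (hs : IsOpen s) :
    ∀ (m : ℕ) (f g : ℝ → ℝ), AnalyticOnNhd ℝ f s → AnalyticOnNhd ℝ g s → ∀ x ∈ s,
      iteratedDeriv m (fun r => f r * g r) x
        = ∑ j ∈ Finset.range (m + 1),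
            (m.choose j : ℝ) * (iteratedDeriv j f x * iteratedDeriv (m - j) g x) := by
  intro m
  induction m with
  | zero => intro f g hf hg x hx; simp
  | succ p ih =>
    intro f g hf hg x hx
    rw [iteratedDeriv_succ']
    have hd : deriv (fun r => f r * g r) =ᶠ[𝓝 x] fun r => deriv f r * g r + f r * deriv g r := by
      filter_upwards [hs.mem_nhds hx] with y hy
      exact deriv_mul ((hf y hy).differentiableAt) ((hg y hy).differentiableAt)
    rw [Filter.EventuallyEq.iteratedDeriv_eq p hd]
    rw [itd_add hs p _ _ ((hf.deriv).mul hg) (hf.mul (hg.deriv)) hx]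
    rw [ih _ _ (hf.deriv) hg x hx, ih _ _ hf (hg.deriv) x hx]
    rw [Finset.sum_choose_succ_mul (fun i k => iteratedDeriv i f x * iteratedDeriv k g x) p]
    have e1 : ∑ j ∈ Finset.range (p + 1),
          (p.choose j : ℝ) * (iteratedDeriv j (deriv f) x * iteratedDeriv (p - j) g x)
        = ∑ j ∈ Finset.range (p + 1),
          (p.choose j : ℝ) * (iteratedDeriv (j + 1) f x * iteratedDeriv (p - j) g x) :=
      Finset.sum_congr rfl fun j _ => by rw [iteratedDeriv_succ']
    have e2 : ∑ j ∈ Finset.range (p + 1),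
          (p.choose j : ℝ) * (iteratedDeriv j f x * iteratedDeriv (p - j) (deriv g) x)
        = ∑ j ∈ Finset.range (p + 1),
          (p.choose j : ℝ) * (iteratedDeriv j f x * iteratedDeriv (p + 1 - j) g x) :=
      Finset.sum_congr rfl fun j hj => by
        have hj' := Finset.mem_range.1 hj
        rw [show p + 1 - j = (p - j) + 1 by omega, iteratedDeriv_succ']
    rw [e1, e2]
    exact add_comm _ _

end helpers
section evals

noncomputable def trm (c : ℝ) (k : ℕ) (g : ℝ → ℝ) : ℝ → ℝ := fun r => c * (r ^ k * g r)

lemma an_trm {s : Set ℝ} (c : ℝ) (k : ℕ) {g : ℝ → ℝ} (hg : AnalyticOnNhd ℝ g s) :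
    AnalyticOnNhd ℝ (trm c k g) s :=
  fun x hx => (analyticAt_const.mul ((analyticAt_id.pow k).mul (hg x hx)))

lemma sum_pow_eval {s : Set ℝ} (hs : IsOpen s) (h0 : (0:ℝ) ∈ s) {g : ℝ → ℝ}
    (hg : AnalyticOnNhd ℝ g s) (m k : ℕ) :
    ∑ j ∈ Finset.range (m + 1),
        (m.choose j : ℝ) * (iteratedDeriv j (fun r : ℝ => r ^ k) 0 * iteratedDeriv (m - j) g 0)
      = (m.choose k : ℝ) * ((k.factorial : ℝ) * iteratedDeriv (m - k) g 0) := by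
  rcases le_or_gt k m with hk | hk
  · rw [Finset.sum_eq_single_of_mem k (Finset.mem_range.2 (by omega))]
    · rw [itd_pow_zero, if_pos rfl]
    · intro j hj hjk
      rw [itd_pow_zero, if_neg hjk]
      ring
  · rw [Finset.sum_eq_zero fun j hj => ?_, Nat.choose_eq_zero_of_lt hk]
    · simp
    · have hj' := Finset.mem_range.1 hj
      rw [itd_pow_zero, if_neg (by omega : j ≠ k)]
      ring

lemma quad_eval {s : Set ℝ} (hs : IsOpen s) (h0 : (0:ℝ) ∈ s) {V : ℝ → ℝ}
    (hA : AnalyticOnNhd ℝ V s) (m : ℕ) (c : ℝ) (k α β : ℕ) :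
    iteratedDeriv m (trm c k (fun r => iteratedDeriv α V r * iteratedDeriv β V r)) 0
      = c * ((m.choose k : ℝ) * (k.factorial : ℝ) *
          ∑ j ∈ Finset.range (m - k + 1), ((m - k).choose j : ℝ) *
            (iteratedDeriv (α + j) V 0 * iteratedDeriv (β + (m - k - j)) V 0)) := by
  have hD := an_iter hA
  have hg : AnalyticOnNhd ℝ (fun r => iteratedDeriv α V r * iteratedDeriv β V r) s :=
    (hD α).mul (hD β)
  have h1 : iteratedDeriv m (trm c k (fun r => iteratedDeriv α V r * iteratedDeriv β V r)) 0
      = c * iteratedDeriv m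
          (fun r => r ^ k * (iteratedDeriv α V r * iteratedDeriv β V r)) 0 :=
    itd_cmul hs m c _ ((an_pow s k).mul hg) h0
  rw [h1, leibniz hs m _ _ (an_pow s k) hg 0 h0, sum_pow_eval hs h0 hg m k,
    leibniz hs (m - k) _ _ (hD α) (hD β) 0 h0]
  simp only [itd_iter]
  ring

lemma single_eval {s : Set ℝ} (hs : IsOpen s) (h0 : (0:ℝ) ∈ s) {V : ℝ → ℝ}
    (hA : AnalyticOnNhd ℝ V s) (m : ℕ) (c : ℝ) (k α : ℕ) :
    iteratedDeriv m (trm c k (iteratedDeriv α V)) 0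
      = c * ((m.choose k : ℝ) * (k.factorial : ℝ) * iteratedDeriv (α + (m - k)) V 0) := by
  have hD := an_iter hA
  have h1 : iteratedDeriv m (trm c k (iteratedDeriv α V)) 0
      = c * iteratedDeriv m (fun r => r ^ k * iteratedDeriv α V r) 0 :=
    itd_cmul hs m c _ ((an_pow s k).mul (hD α)) h0
  rw [h1, leibniz hs m _ _ (an_pow s k) (hD α) 0 h0, sum_pow_eval hs h0 (hD α) m k, itd_iter]
  ring

end evals


/-- The fifth-order supersymmetry ODE (4.14) as an expression in `V` and `r`. -/
noncomputable def ODE5 (V : ℝ → ℝ) (r : ℝ) : ℝ :=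
  3 * r ^ 4 * V r * iteratedDeriv 5 V r + 6 * r ^ 4 * deriv V r * iteratedDeriv 4 V r
    + 30 * r ^ 3 * V r * iteratedDeriv 4 V r + 44 * r ^ 3 * deriv V r * iteratedDeriv 3 V r
    + r ^ 2 * (47 * V r - 32) * iteratedDeriv 3 V r + 8 * r ^ 3 * (iteratedDeriv 2 V r) ^ 2
    - 3 * r * (13 * V r + 32) * iteratedDeriv 2 V r + 26 * r ^ 2 * deriv V r * iteratedDeriv 2 V r
    - 34 * r * (deriv V r) ^ 2 + 3 * deriv V r * (13 * V r + 32)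

/-- Inductive step of the uniqueness proof: if an analytic solution of the fifth-order
supersymmetry ODE near `0` has `V(0) = V₀ > 1` and all Taylor coefficients of orders
`1, 3, 4, …, n − 1` vanish (`n ≥ 4`), then the `n`-th coefficient also vanishes. -/
theorem stmt_7 (V : ℝ → ℝ) (V₀ : ℝ) (n : ℕ) (hn : 4 ≤ n)
    (hV : AnalyticAt ℝ V 0)
    (hode : ∀ᶠ r in nhds (0 : ℝ), ODE5 V r = 0)
    (hV₀ : V 0 = V₀) (hV₀gt : 1 < V₀)
    (h1 : deriv V 0 = 0) (h3 : iteratedDeriv 3 V 0 = 0)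
    (hmid : ∀ k, 4 ≤ k → k < n → iteratedDeriv k V 0 = 0) :
    iteratedDeriv n V 0 = 0 := by
  obtain ⟨m, rfl⟩ : ∃ m, n = m + 1 := ⟨n - 1, by omega⟩
  have hm : 3 ≤ m := by omega
  obtain ⟨s, hst, hs, h0⟩ := mem_nhds_iff.1 hV.eventually_analyticAt
  have hA : AnalyticOnNhd ℝ V s := fun y hy => hst hy
  have hD := an_iter hA
  have h1' : iteratedDeriv 1 V 0 = 0 := by rw [iteratedDeriv_one]; exact h1
  have ha0 : iteratedDeriv 0 V 0 = V₀ := by rw [iteratedDeriv_zero]; exact hV₀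
  have hz : ∀ p : ℕ, p ≠ 0 → p ≠ 2 → p < m + 1 → iteratedDeriv p V 0 = 0 := by
    intro p hp0 hp2 hpn
    rcases Nat.lt_or_ge p 4 with h4 | h4
    · interval_cases p
      · exact absurd rfl hp0
      · exact h1'
      · exact absurd rfl hp2
      · exact h3
    · exact hmid p h4 hpn
  have hE0 : iteratedDeriv m (ODE5 V) 0 = 0 := by
    have hode' : ODE5 V =ᶠ[nhds (0:ℝ)] fun _ => (0:ℝ) := hode
    rw [Filter.EventuallyEq.iteratedDeriv_eq m hode']
    exact itd_zero_fun m 0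
  have hfun : ODE5 V = fun r => trm 3 4 (fun r => iteratedDeriv 0 V r * iteratedDeriv 5 V r) r + trm 6 4 (fun r => iteratedDeriv 1 V r * iteratedDeriv 4 V r) r + trm 30 3 (fun r => iteratedDeriv 0 V r * iteratedDeriv 4 V r) r + trm 44 3 (fun r => iteratedDeriv 1 V r * iteratedDeriv 3 V r) r + trm 47 2 (fun r => iteratedDeriv 0 V r * iteratedDeriv 3 V r) r + trm (-32) 2 (iteratedDeriv 3 V) r + trm 8 3 (fun r => iteratedDeriv 2 V r * iteratedDeriv 2 V r) r + trm (-39) 1 (fun r => iteratedDeriv 0 V r * iteratedDeriv 2 V r) r + trm (-96) 1 (iteratedDeriv 2 V) r + trm 26 2 (fun r => iteratedDeriv 1 V r * iteratedDeriv 2 V r) r + trm (-34) 1 (fun r => iteratedDeriv 1 V r * iteratedDeriv 1 V r) r + trm 39 0 (fun r => iteratedDeriv 0 V r * iteratedDeriv 1 V r) r + trm 96 0 (iteratedDeriv 1 V) r := by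
    funext r
    simp only [ODE5, trm, iteratedDeriv_zero, iteratedDeriv_one]
    ring
  rw [hfun] at hE0
  have hT1 : AnalyticOnNhd ℝ (trm 3 4 (fun r => iteratedDeriv 0 V r * iteratedDeriv 5 V r)) s := an_trm 3 4 ((hD 0).mul (hD 5))
  have hT2 : AnalyticOnNhd ℝ (trm 6 4 (fun r => iteratedDeriv 1 V r * iteratedDeriv 4 V r)) s := an_trm 6 4 ((hD 1).mul (hD 4))
  have hT3 : AnalyticOnNhd ℝ (trm 30 3 (fun r => iteratedDeriv 0 V r * iteratedDeriv 4 V r)) s := an_trm 30 3 ((hD 0).mul (hD 4))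
  have hT4 : AnalyticOnNhd ℝ (trm 44 3 (fun r => iteratedDeriv 1 V r * iteratedDeriv 3 V r)) s := an_trm 44 3 ((hD 1).mul (hD 3))
  have hT5 : AnalyticOnNhd ℝ (trm 47 2 (fun r => iteratedDeriv 0 V r * iteratedDeriv 3 V r)) s := an_trm 47 2 ((hD 0).mul (hD 3))
  have hT6 : AnalyticOnNhd ℝ (trm (-32) 2 (iteratedDeriv 3 V)) s := an_trm (-32) 2 (hD 3)
  have hT7 : AnalyticOnNhd ℝ (trm 8 3 (fun r => iteratedDeriv 2 V r * iteratedDeriv 2 V r)) s := an_trm 8 3 ((hD 2).mul (hD 2))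
  have hT8 : AnalyticOnNhd ℝ (trm (-39) 1 (fun r => iteratedDeriv 0 V r * iteratedDeriv 2 V r)) s := an_trm (-39) 1 ((hD 0).mul (hD 2))
  have hT9 : AnalyticOnNhd ℝ (trm (-96) 1 (iteratedDeriv 2 V)) s := an_trm (-96) 1 (hD 2)
  have hT10 : AnalyticOnNhd ℝ (trm 26 2 (fun r => iteratedDeriv 1 V r * iteratedDeriv 2 V r)) s := an_trm 26 2 ((hD 1).mul (hD 2))
  have hT11 : AnalyticOnNhd ℝ (trm (-34) 1 (fun r => iteratedDeriv 1 V r * iteratedDeriv 1 V r)) s := an_trm (-34) 1 ((hD 1).mul (hD 1))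
  have hT12 : AnalyticOnNhd ℝ (trm 39 0 (fun r => iteratedDeriv 0 V r * iteratedDeriv 1 V r)) s := an_trm 39 0 ((hD 0).mul (hD 1))
  have hT13 : AnalyticOnNhd ℝ (trm 96 0 (iteratedDeriv 1 V)) s := an_trm 96 0 (hD 1)
  have hP2 : AnalyticOnNhd ℝ (fun r => trm 3 4 (fun r => iteratedDeriv 0 V r * iteratedDeriv 5 V r) r + trm 6 4 (fun r => iteratedDeriv 1 V r * iteratedDeriv 4 V r) r) s :=
    fun y hy => (hT1 y hy).add (hT2 y hy)
  have hP3 : AnalyticOnNhd ℝ (fun r => trm 3 4 (fun r => iteratedDeriv 0 V r * iteratedDeriv 5 V r) r + trm 6 4 (fun r => iteratedDeriv 1 V r * iteratedDeriv 4 V r) r + trm 30 3 (fun r => iteratedDeriv 0 V r * iteratedDeriv 4 V r) r) s :=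
    fun y hy => (hP2 y hy).add (hT3 y hy)
  have hP4 : AnalyticOnNhd ℝ (fun r => trm 3 4 (fun r => iteratedDeriv 0 V r * iteratedDeriv 5 V r) r + trm 6 4 (fun r => iteratedDeriv 1 V r * iteratedDeriv 4 V r) r + trm 30 3 (fun r => iteratedDeriv 0 V r * iteratedDeriv 4 V r) r + trm 44 3 (fun r => iteratedDeriv 1 V r * iteratedDeriv 3 V r) r) s :=
    fun y hy => (hP3 y hy).add (hT4 y hy)
  have hP5 : AnalyticOnNhd ℝ (fun r => trm 3 4 (fun r => iteratedDeriv 0 V r * iteratedDeriv 5 V r) r + trm 6 4 (fun r => iteratedDeriv 1 V r * iteratedDeriv 4 V r) r + trm 30 3 (fun r => iteratedDeriv 0 V r * iteratedDeriv 4 V r) r + trm 44 3 (fun r => iteratedDeriv 1 V r * iteratedDeriv 3 V r) r + trm 47 2 (fun r => iteratedDeriv 0 V r * iteratedDeriv 3 V r) r) s :=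
    fun y hy => (hP4 y hy).add (hT5 y hy)
  have hP6 : AnalyticOnNhd ℝ (fun r => trm 3 4 (fun r => iteratedDeriv 0 V r * iteratedDeriv 5 V r) r + trm 6 4 (fun r => iteratedDeriv 1 V r * iteratedDeriv 4 V r) r + trm 30 3 (fun r => iteratedDeriv 0 V r * iteratedDeriv 4 V r) r + trm 44 3 (fun r => iteratedDeriv 1 V r * iteratedDeriv 3 V r) r + trm 47 2 (fun r => iteratedDeriv 0 V r * iteratedDeriv 3 V r) r + trm (-32) 2 (iteratedDeriv 3 V) r) s :=
    fun y hy => (hP5 y hy).add (hT6 y hy)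
  have hP7 : AnalyticOnNhd ℝ (fun r => trm 3 4 (fun r => iteratedDeriv 0 V r * iteratedDeriv 5 V r) r + trm 6 4 (fun r => iteratedDeriv 1 V r * iteratedDeriv 4 V r) r + trm 30 3 (fun r => iteratedDeriv 0 V r * iteratedDeriv 4 V r) r + trm 44 3 (fun r => iteratedDeriv 1 V r * iteratedDeriv 3 V r) r + trm 47 2 (fun r => iteratedDeriv 0 V r * iteratedDeriv 3 V r) r + trm (-32) 2 (iteratedDeriv 3 V) r + trm 8 3 (fun r => iteratedDeriv 2 V r * iteratedDeriv 2 V r) r) s :=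
    fun y hy => (hP6 y hy).add (hT7 y hy)
  have hP8 : AnalyticOnNhd ℝ (fun r => trm 3 4 (fun r => iteratedDeriv 0 V r * iteratedDeriv 5 V r) r + trm 6 4 (fun r => iteratedDeriv 1 V r * iteratedDeriv 4 V r) r + trm 30 3 (fun r => iteratedDeriv 0 V r * iteratedDeriv 4 V r) r + trm 44 3 (fun r => iteratedDeriv 1 V r * iteratedDeriv 3 V r) r + trm 47 2 (fun r => iteratedDeriv 0 V r * iteratedDeriv 3 V r) r + trm (-32) 2 (iteratedDeriv 3 V) r + trm 8 3 (fun r => iteratedDeriv 2 V r * iteratedDeriv 2 V r) r + trm (-39) 1 (fun r => iteratedDeriv 0 V r * iteratedDeriv 2 V r) r) s :=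
    fun y hy => (hP7 y hy).add (hT8 y hy)
  have hP9 : AnalyticOnNhd ℝ (fun r => trm 3 4 (fun r => iteratedDeriv 0 V r * iteratedDeriv 5 V r) r + trm 6 4 (fun r => iteratedDeriv 1 V r * iteratedDeriv 4 V r) r + trm 30 3 (fun r => iteratedDeriv 0 V r * iteratedDeriv 4 V r) r + trm 44 3 (fun r => iteratedDeriv 1 V r * iteratedDeriv 3 V r) r + trm 47 2 (fun r => iteratedDeriv 0 V r * iteratedDeriv 3 V r) r + trm (-32) 2 (iteratedDeriv 3 V) r + trm 8 3 (fun r => iteratedDeriv 2 V r * iteratedDeriv 2 V r) r + trm (-39) 1 (fun r => iteratedDeriv 0 V r * iteratedDeriv 2 V r) r + trm (-96) 1 (iteratedDeriv 2 V) r) s :=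
    fun y hy => (hP8 y hy).add (hT9 y hy)
  have hP10 : AnalyticOnNhd ℝ (fun r => trm 3 4 (fun r => iteratedDeriv 0 V r * iteratedDeriv 5 V r) r + trm 6 4 (fun r => iteratedDeriv 1 V r * iteratedDeriv 4 V r) r + trm 30 3 (fun r => iteratedDeriv 0 V r * iteratedDeriv 4 V r) r + trm 44 3 (fun r => iteratedDeriv 1 V r * iteratedDeriv 3 V r) r + trm 47 2 (fun r => iteratedDeriv 0 V r * iteratedDeriv 3 V r) r + trm (-32) 2 (iteratedDeriv 3 V) r + trm 8 3 (fun r => iteratedDeriv 2 V r * iteratedDeriv 2 V r) r + trm (-39) 1 (fun r => iteratedDeriv 0 V r * iteratedDeriv 2 V r) r + trm (-96) 1 (iteratedDeriv 2 V) r + trm 26 2 (fun r => iteratedDeriv 1 V r * iteratedDeriv 2 V r) r) s :=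
    fun y hy => (hP9 y hy).add (hT10 y hy)
  have hP11 : AnalyticOnNhd ℝ (fun r => trm 3 4 (fun r => iteratedDeriv 0 V r * iteratedDeriv 5 V r) r + trm 6 4 (fun r => iteratedDeriv 1 V r * iteratedDeriv 4 V r) r + trm 30 3 (fun r => iteratedDeriv 0 V r * iteratedDeriv 4 V r) r + trm 44 3 (fun r => iteratedDeriv 1 V r * iteratedDeriv 3 V r) r + trm 47 2 (fun r => iteratedDeriv 0 V r * iteratedDeriv 3 V r) r + trm (-32) 2 (iteratedDeriv 3 V) r + trm 8 3 (fun r => iteratedDeriv 2 V r * iteratedDeriv 2 V r) r + trm (-39) 1 (fun r => iteratedDeriv 0 V r * iteratedDeriv 2 V r) r + trm (-96) 1 (iteratedDeriv 2 V) r + trm 26 2 (fun r => iteratedDeriv 1 V r * iteratedDeriv 2 V r) r + trm (-34) 1 (fun r => iteratedDeriv 1 V r * iteratedDeriv 1 V r) r) s :=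
    fun y hy => (hP10 y hy).add (hT11 y hy)
  have hP12 : AnalyticOnNhd ℝ (fun r => trm 3 4 (fun r => iteratedDeriv 0 V r * iteratedDeriv 5 V r) r + trm 6 4 (fun r => iteratedDeriv 1 V r * iteratedDeriv 4 V r) r + trm 30 3 (fun r => iteratedDeriv 0 V r * iteratedDeriv 4 V r) r + trm 44 3 (fun r => iteratedDeriv 1 V r * iteratedDeriv 3 V r) r + trm 47 2 (fun r => iteratedDeriv 0 V r * iteratedDeriv 3 V r) r + trm (-32) 2 (iteratedDeriv 3 V) r + trm 8 3 (fun r => iteratedDeriv 2 V r * iteratedDeriv 2 V r) r + trm (-39) 1 (fun r => iteratedDeriv 0 V r * iteratedDeriv 2 V r) r + trm (-96) 1 (iteratedDeriv 2 V) r + trm 26 2 (fun r => iteratedDeriv 1 V r * iteratedDeriv 2 V r) r + trm (-34) 1 (fun r => iteratedDeriv 1 V r * iteratedDeriv 1 V r) r + trm 39 0 (fun r => iteratedDeriv 0 V r * iteratedDeriv 1 V r) r) s :=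
    fun y hy => (hP11 y hy).add (hT12 y hy)
  rw [itd_add hs m _ _ hP12 hT13 h0] at hE0
  rw [itd_add hs m _ _ hP11 hT12 h0] at hE0
  rw [itd_add hs m _ _ hP10 hT11 h0] at hE0
  rw [itd_add hs m _ _ hP9 hT10 h0] at hE0
  rw [itd_add hs m _ _ hP8 hT9 h0] at hE0
  rw [itd_add hs m _ _ hP7 hT8 h0] at hE0
  rw [itd_add hs m _ _ hP6 hT7 h0] at hE0
  rw [itd_add hs m _ _ hP5 hT6 h0] at hE0
  rw [itd_add hs m _ _ hP4 hT5 h0] at hE0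
  rw [itd_add hs m _ _ hP3 hT4 h0] at hE0
  rw [itd_add hs m _ _ hP2 hT3 h0] at hE0
  rw [itd_add hs m _ _ hT1 hT2 h0] at hE0
  rw [quad_eval hs h0 hA m 3 4 0 5, quad_eval hs h0 hA m 6 4 1 4, quad_eval hs h0 hA m 30 3 0 4, quad_eval hs h0 hA m 44 3 1 3, quad_eval hs h0 hA m 47 2 0 3, single_eval hs h0 hA m (-32) 2 3, quad_eval hs h0 hA m 8 3 2 2, quad_eval hs h0 hA m (-39) 1 0 2, single_eval hs h0 hA m (-96) 1 2, quad_eval hs h0 hA m 26 2 1 2, quad_eval hs h0 hA m (-34) 1 1 1, quad_eval hs h0 hA m 39 0 0 1, single_eval hs h0 hA m 96 0 1] at hE0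
  rw [show ((4:ℕ).factorial : ℝ) = 24 from by norm_num [Nat.factorial],
    show ((3:ℕ).factorial : ℝ) = 6 from by norm_num [Nat.factorial],
    show ((2:ℕ).factorial : ℝ) = 2 from by norm_num [Nat.factorial],
    show ((1:ℕ).factorial : ℝ) = 1 from by norm_num [Nat.factorial],
    show ((0:ℕ).factorial : ℝ) = 1 from by norm_num [Nat.factorial]] at hE0
  rcases Nat.lt_or_ge m 4 with hm4 | hm4
  · have hm3 : m = 3 := by omega
    subst hm3
    norm_num [Finset.sum_range_succ, Nat.choose, ha0, h1', h3] at hE0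
    have key : (V₀ - 1) * iteratedDeriv 4 V 0 = 0 := by linear_combination hE0 / 384
    rcases mul_eq_zero.1 key with h | h
    · linarith
    · exact h
  · obtain ⟨q, rfl⟩ : ∃ q, m = q + 4 := ⟨m - 4, by omega⟩
    have hprod : ∀ p p' : ℕ, p + p' = q + 5 → 1 ≤ p → p < q + 5 →
        iteratedDeriv p V 0 * iteratedDeriv p' V 0 = 0 := by
      intro p p' hpp hp1 hpn
      rcases eq_or_ne p 2 with rfl | hp2
      · rw [hz p' (by omega) (by omega) (by omega), mul_zero]
      · rw [hz p (by omega) hp2 (by omega), zero_mul]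
    have hS0 : ∀ β M : ℕ, 1 ≤ β → β + M = q + 5 →
        ∑ j ∈ Finset.range (M + 1), (M.choose j : ℝ) *
          (iteratedDeriv (0 + j) V 0 * iteratedDeriv (β + (M - j)) V 0)
          = V₀ * iteratedDeriv (q + 4 + 1) V 0 := by
      intro β M hb hbM
      rw [Finset.sum_eq_single_of_mem 0 (Finset.mem_range.2 (by omega))]
      · rw [show β + (M - 0) = q + 4 + 1 by omega, show (0 + 0 : ℕ) = 0 from rfl,
          Nat.choose_zero_right, ha0]
        push_cast
        ring
      · intro j hj hj0
        have hjM := Finset.mem_range.1 hj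
        rw [zero_add, hprod j (β + (M - j)) (by omega) (by omega) (by omega), mul_zero]
    have hSp : ∀ α β M : ℕ, 1 ≤ α → 1 ≤ β → α + β + M = q + 5 →
        ∑ j ∈ Finset.range (M + 1), (M.choose j : ℝ) *
          (iteratedDeriv (α + j) V 0 * iteratedDeriv (β + (M - j)) V 0) = 0 := by
      intro α β M ha hb habM
      refine Finset.sum_eq_zero fun j hj => ?_
      have hjM := Finset.mem_range.1 hj
      rw [hprod (α + j) (β + (M - j)) (by omega) (by omega) (by omega), mul_zero]
    rw [hS0 5 (q + 4 - 4) (by omega) (by omega),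
      hSp 1 4 (q + 4 - 4) (by omega) (by omega) (by omega),
      hS0 4 (q + 4 - 3) (by omega) (by omega),
      hSp 1 3 (q + 4 - 3) (by omega) (by omega) (by omega),
      hS0 3 (q + 4 - 2) (by omega) (by omega),
      hSp 2 2 (q + 4 - 3) (by omega) (by omega) (by omega),
      hS0 2 (q + 4 - 1) (by omega) (by omega),
      hSp 1 2 (q + 4 - 2) (by omega) (by omega) (by omega),
      hSp 1 1 (q + 4 - 1) (by omega) (by omega) (by omega),
      hS0 1 (q + 4 - 0) (by omega) (by omega)] at hE0
    rw [show 3 + (q + 4 - 2) = q + 4 + 1 by omega, show 2 + (q + 4 - 1) = q + 4 + 1 by omega,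
      show 1 + (q + 4 - 0) = q + 4 + 1 by omega] at hE0
    have hC1 : (((q + 4).choose 1 : ℕ) : ℝ) = (q : ℝ) + 4 := by
      rw [Nat.choose_one_right]; push_cast; ring
    have hC2 : (((q + 4).choose 2 : ℕ) : ℝ) * 2 = ((q:ℝ) + 3) * ((q:ℝ) + 4) := by
      have h := Nat.descFactorial_eq_factorial_mul_choose (q + 4) 2
      have h2 : (q + 4).descFactorial 2 = (q + 3) * ((q + 4) * 1) := by
        rw [Nat.descFactorial_succ, Nat.descFactorial_succ, Nat.descFactorial_zero,
          show q + 4 - 1 = q + 3 by omega, show q + 4 - 0 = q + 4 by omega]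
      have h3' := h2.symm.trans h
      have := congrArg (fun t : ℕ => (t : ℝ)) h3'
      push_cast [Nat.factorial] at this
      linarith
    have hC3 : (((q + 4).choose 3 : ℕ) : ℝ) * 6 = ((q:ℝ) + 2) * (((q:ℝ) + 3) * ((q:ℝ) + 4)) := by
      have h := Nat.descFactorial_eq_factorial_mul_choose (q + 4) 3
      have h2 : (q + 4).descFactorial 3 = (q + 2) * ((q + 3) * ((q + 4) * 1)) := by
        rw [Nat.descFactorial_succ, Nat.descFactorial_succ, Nat.descFactorial_succ,
          Nat.descFactorial_zero, show q + 4 - 2 = q + 2 by omega,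
          show q + 4 - 1 = q + 3 by omega, show q + 4 - 0 = q + 4 by omega]
      have h3' := h2.symm.trans h
      have := congrArg (fun t : ℕ => (t : ℝ)) h3'
      push_cast [Nat.factorial] at this
      linarith
    have hC4 : (((q + 4).choose 4 : ℕ) : ℝ) * 24 = ((q:ℝ) + 1) * (((q:ℝ) + 2) * (((q:ℝ) + 3) * ((q:ℝ) + 4))) := by
      have h := Nat.descFactorial_eq_factorial_mul_choose (q + 4) 4
      have h2 : (q + 4).descFactorial 4 = (q + 1) * ((q + 2) * ((q + 3) * ((q + 4) * 1))) := by
        rw [Nat.descFactorial_succ, Nat.descFactorial_succ, Nat.descFactorial_succ,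
          Nat.descFactorial_succ, Nat.descFactorial_zero, show q + 4 - 3 = q + 1 by omega,
          show q + 4 - 2 = q + 2 by omega, show q + 4 - 1 = q + 3 by omega,
          show q + 4 - 0 = q + 4 by omega]
      have h3' := h2.symm.trans h
      have := congrArg (fun t : ℕ => (t : ℝ)) h3'
      push_cast [Nat.factorial] at this
      linarith
    have hC0 : (((q + 4).choose 0 : ℕ) : ℝ) = 1 := by simp
    set X := iteratedDeriv (q + 4 + 1) V 0 with hX
    set Aq : ℝ := 3 * (((q:ℝ) + 1) * (((q:ℝ) + 2) * (((q:ℝ) + 3) * ((q:ℝ) + 4))))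
      + 30 * (((q:ℝ) + 2) * (((q:ℝ) + 3) * ((q:ℝ) + 4))) + 47 * (((q:ℝ) + 3) * ((q:ℝ) + 4))
      - 39 * ((q:ℝ) + 4) + 39 with hAq
    set Bq : ℝ := 32 * (((q:ℝ) + 3) * ((q:ℝ) + 4)) + 96 * ((q:ℝ) + 4) - 96 with hBq
    have key : (V₀ * Aq - Bq) * X = 0 := by
      rw [hAq, hBq]
      linear_combination hE0 - (3 * V₀ * X) * hC4 - (30 * V₀ * X) * hC3
        - (47 * V₀ * X) * hC2 + (32 * X) * hC2 + (39 * V₀ * X) * hC1 + (96 * X) * hC1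
        - (39 * V₀ * X) * hC0 - (96 * X) * hC0
    clear hP2 hP3 hP4 hP5 hP6 hP7 hP8 hP9 hP10 hP11 hP12 hT1 hT2 hT3 hT4 hT5 hT6 hT7 hT8 hT9 hT10 hT11 hT12 hT13 hfun hE0 hS0 hSp hprod hz hD hA hode hV hmid hst hC0 hC1 hC2 hC3 hC4
    have hq0 : (0:ℝ) ≤ (q:ℝ) := Nat.cast_nonneg q
    have hApos : 0 < Aq := by rw [hAq]; nlinarith [hq0, mul_nonneg hq0 hq0, mul_nonneg (mul_nonneg hq0 hq0) hq0, mul_nonneg (mul_nonneg (mul_nonneg hq0 hq0) hq0) hq0]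
    have hAB : Bq ≤ Aq := by rw [hAq, hBq]; nlinarith [hq0, mul_nonneg hq0 hq0, mul_nonneg (mul_nonneg hq0 hq0) hq0, mul_nonneg (mul_nonneg (mul_nonneg hq0 hq0) hq0) hq0]
    have hK : 0 < V₀ * Aq - Bq := by
      have h' : Aq < V₀ * Aq := (lt_mul_iff_one_lt_left hApos).2 hV₀gt
      linarith
    rcases mul_eq_zero.1 key with h | h
    · exact absurd h (by linarith)
    · exact h
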